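/- For ε ≥ 0 and ξ ∈ (0, √2), define V_ε(ξ) = (1/2)·log(√((1 − ξ²)² + ε²)/√(1 + ε²)), so that V_0(ξ) = (1/2)·log|1 − ξ²|. Then for every fixed a ∈ (0, √2): (i) for every ε ≥ 0 the function ξ ↦ 1/√(−2·V_ε(ξ)) is integrable on (a, √2); and (ii) lim_{ε→0⁺} ∫_a^{√2} dξ/√(−2·V_ε(ξ)) = ∫_a^{√2} dξ/√(−log|1 − ξ²|). -/

import Mathlib

open MeasureTheory Filter Set

/-- The regularized potential V_ε(ξ) = (1/2)·log(√((1 − ξ²)² + ε²)/√(1 + ε²)). -/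
noncomputable def Vreg (ε ξ : ℝ) : ℝ :=
  (1 / 2) * Real.log (Real.sqrt ((1 - ξ ^ 2) ^ 2 + ε ^ 2) / Real.sqrt (1 + ε ^ 2))

lemma Vreg_zero (ξ : ℝ) : -(2 * Vreg 0 ξ) = -Real.log |1 - ξ ^ 2| := by
  have h : Vreg 0 ξ = (1 / 2) * Real.log |1 - ξ ^ 2| := by
    simp [Vreg, Real.sqrt_sq_eq_abs]
  rw [h]; ring

/-- Key lower bound for the regularized potential. -/
lemma Vreg_lb {a ε ξ : ℝ} (ha : 0 < a) (hξ1 : a < ξ) (hξ2 : ξ < Real.sqrt 2)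
    (hε : 0 ≤ ε) (h : 0 < ε ∨ ξ ≠ 1) :
    a ^ 2 * Real.sqrt 2 * (Real.sqrt 2 - ξ) / (2 * (1 + ε ^ 2)) ≤ -(2 * Vreg ε ξ) := by
  have hξ0 : 0 < ξ := ha.trans hξ1
  have hs0 : (0:ℝ) ≤ ε ^ 2 := sq_nonneg ε
  have hts : 0 < (1 - ξ ^ 2) ^ 2 + ε ^ 2 := by
    rcases h with h | h
    · positivity
    · have h1 : 1 - ξ ^ 2 ≠ 0 := by
        intro hz
        have hm : (ξ - 1) * (ξ + 1) = 0 := by linear_combination -hz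
        rcases mul_eq_zero.1 hm with h' | h'
        · exact h (by linarith)
        · linarith
      positivity
  have h1s : 0 < 1 + ε ^ 2 := by positivity
  have hξsq : ξ ^ 2 < 2 := (Real.lt_sqrt hξ0.le).1 hξ2
  have htle : (1 - ξ ^ 2) ^ 2 < 1 := by
    have hx2 : 0 < ξ ^ 2 := by positivity
    nlinarith [mul_pos hx2 (show (0:ℝ) < 2 - ξ ^ 2 by linarith)]
  -- rewrite Vreg
  have hV : -(2 * Vreg ε ξ) =
      (1 / 2) * (Real.log (1 + ε ^ 2) - Real.log ((1 - ξ ^ 2) ^ 2 + ε ^ 2)) := by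
    rw [Vreg, Real.log_div (Real.sqrt_pos.2 hts).ne' ((Real.sqrt_pos.2 h1s).ne'),
      Real.log_sqrt hts.le, Real.log_sqrt h1s.le]
    ring
  have hy : 0 < ((1 - ξ ^ 2) ^ 2 + ε ^ 2) / (1 + ε ^ 2) := div_pos hts h1s
  have hlog := Real.log_le_sub_one_of_pos hy
  have hld : Real.log (((1 - ξ ^ 2) ^ 2 + ε ^ 2) / (1 + ε ^ 2))
      = Real.log ((1 - ξ ^ 2) ^ 2 + ε ^ 2) - Real.log (1 + ε ^ 2) :=
    Real.log_div hts.ne' h1s.ne'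
  have hfrac : ((1 - ξ ^ 2) ^ 2 + ε ^ 2) / (1 + ε ^ 2) - 1
      = -((1 - (1 - ξ ^ 2) ^ 2) / (1 + ε ^ 2)) := by
    field_simp
    ring
  have key : (1 - (1 - ξ ^ 2) ^ 2) / (1 + ε ^ 2)
      ≤ Real.log (1 + ε ^ 2) - Real.log ((1 - ξ ^ 2) ^ 2 + ε ^ 2) := by
    rw [hld, hfrac] at hlog
    linarith
  rw [hV]
  have hw : a ^ 2 * Real.sqrt 2 * (Real.sqrt 2 - ξ) ≤ 1 - (1 - ξ ^ 2) ^ 2 := by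
    have h2 : Real.sqrt 2 ^ 2 = 2 := Real.sq_sqrt (by norm_num)
    have ha2 : a ^ 2 ≤ ξ ^ 2 := by nlinarith
    have hsp : (0:ℝ) < Real.sqrt 2 := Real.sqrt_pos.2 (by norm_num)
    have hd : 0 ≤ Real.sqrt 2 - ξ := by linarith
    have step1 : a ^ 2 * Real.sqrt 2 * (Real.sqrt 2 - ξ)
        ≤ ξ ^ 2 * Real.sqrt 2 * (Real.sqrt 2 - ξ) := by gcongr
    have step2 : ξ ^ 2 * Real.sqrt 2 * (Real.sqrt 2 - ξ)
        ≤ ξ ^ 2 * (Real.sqrt 2 + ξ) * (Real.sqrt 2 - ξ) := by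
      have : Real.sqrt 2 ≤ Real.sqrt 2 + ξ := by linarith
      gcongr
    have heq : ξ ^ 2 * (Real.sqrt 2 + ξ) * (Real.sqrt 2 - ξ) = 1 - (1 - ξ ^ 2) ^ 2 := by
      linear_combination (ξ ^ 2) * h2
    linarith
  calc a ^ 2 * Real.sqrt 2 * (Real.sqrt 2 - ξ) / (2 * (1 + ε ^ 2))
      ≤ (1 - (1 - ξ ^ 2) ^ 2) / (2 * (1 + ε ^ 2)) := by
        gcongr
    _ = (1 / 2) * ((1 - (1 - ξ ^ 2) ^ 2) / (1 + ε ^ 2)) := by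
        field_simp
    _ ≤ _ := by linarith

lemma Vreg_zero_one : Vreg 0 1 = 0 := by
  norm_num [Vreg]

/-- The integrand bound. -/
lemma integrand_le {a ε ξ : ℝ} (ha : 0 < a) (hξ : ξ ∈ Ioo a (Real.sqrt 2)) (hε : 0 ≤ ε)
    {c : ℝ} (hc : 0 < c) (hcle : c ≤ a ^ 2 * Real.sqrt 2 / (2 * (1 + ε ^ 2))) :
    1 / Real.sqrt (-(2 * Vreg ε ξ)) ≤ (1 / Real.sqrt c) * (1 / Real.sqrt (Real.sqrt 2 - ξ)) := by
  by_cases h1 : ε = 0 ∧ ξ = 1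
  · obtain ⟨he, hx⟩ := h1
    subst he; subst hx
    rw [Vreg_zero_one]
    norm_num
    positivity
  · have hor : 0 < ε ∨ ξ ≠ 1 := by
      rcases eq_or_lt_of_le hε with h' | h'
      · exact Or.inr fun hx => h1 ⟨h'.symm, hx⟩
      · exact Or.inl h'
    have hlb := Vreg_lb ha hξ.1 hξ.2 hε hor
    have hd : 0 < Real.sqrt 2 - ξ := sub_pos.2 hξ.2
    have hc2 : c * (Real.sqrt 2 - ξ) ≤ -(2 * Vreg ε ξ) := by
      calc c * (Real.sqrt 2 - ξ)
          ≤ (a ^ 2 * Real.sqrt 2 / (2 * (1 + ε ^ 2))) * (Real.sqrt 2 - ξ) := by gcongr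
        _ = a ^ 2 * Real.sqrt 2 * (Real.sqrt 2 - ξ) / (2 * (1 + ε ^ 2)) := by ring
        _ ≤ _ := hlb
    have hpos : 0 < c * (Real.sqrt 2 - ξ) := mul_pos hc hd
    have h3 : 0 < Real.sqrt (c * (Real.sqrt 2 - ξ)) := Real.sqrt_pos.2 hpos
    calc 1 / Real.sqrt (-(2 * Vreg ε ξ))
        ≤ 1 / Real.sqrt (c * (Real.sqrt 2 - ξ)) :=
          one_div_le_one_div_of_le h3 (Real.sqrt_le_sqrt hc2)
      _ = (1 / Real.sqrt c) * (1 / Real.sqrt (Real.sqrt 2 - ξ)) := by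
          rw [Real.sqrt_mul hc.le]; ring

lemma integrand_meas (ε : ℝ) :
    Measurable (fun ξ : ℝ => 1 / Real.sqrt (-(2 * Vreg ε ξ))) := by
  unfold Vreg
  have hm : Measurable fun ξ : ℝ =>
      Real.sqrt ((1 - ξ ^ 2) ^ 2 + ε ^ 2) / Real.sqrt (1 + ε ^ 2) :=
    ((Real.continuous_sqrt.comp (by continuity)).div_const _).measurable
  have : Measurable fun ξ : ℝ =>
      Real.sqrt (-(2 * ((1 / 2) * Real.log (Real.sqrt ((1 - ξ ^ 2) ^ 2 + ε ^ 2) / Real.sqrt (1 + ε ^ 2))))) :=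
    Real.continuous_sqrt.measurable.comp (((Real.measurable_log.comp hm).const_mul _).const_mul _).neg
  exact measurable_const.div this

lemma g_integrable (a : ℝ) :
    IntegrableOn (fun ξ : ℝ => 1 / Real.sqrt (Real.sqrt 2 - ξ)) (Ioo a (Real.sqrt 2)) := by
  have h1 : IntervalIntegrable (fun x : ℝ => x ^ (-(1/2) : ℝ)) volume
      (Real.sqrt 2 - a) (Real.sqrt 2 - Real.sqrt 2) :=
    intervalIntegral.intervalIntegrable_rpow' (by norm_num)
  have h2 := h1.comp_sub_left (Real.sqrt 2)
  simp only [sub_sub_cancel] at h2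
  rcases le_or_gt a (Real.sqrt 2) with hab | hab
  · rw [intervalIntegrable_iff_integrableOn_Ioc_of_le hab] at h2
    have h3 : IntegrableOn (fun x : ℝ => (Real.sqrt 2 - x) ^ (-(1/2) : ℝ))
        (Ioo a (Real.sqrt 2)) := h2.mono_set Ioo_subset_Ioc_self
    apply h3.congr_fun ?_ measurableSet_Ioo
    intro ξ hξ
    have hd : 0 < Real.sqrt 2 - ξ := sub_pos.2 hξ.2
    show (Real.sqrt 2 - ξ) ^ (-(1/2) : ℝ) = 1 / Real.sqrt (Real.sqrt 2 - ξ)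
    rw [Real.rpow_neg hd.le, ← Real.sqrt_eq_rpow, one_div]
  · have : Ioo a (Real.sqrt 2) = ∅ := Ioo_eq_empty (by linarith)
    rw [this]
    exact integrableOn_empty

lemma tendsto_eps {ξ : ℝ} (hξ0 : 0 < ξ) (hξ1 : ξ ≠ 1) (hpos : 0 < -(2 * Vreg 0 ξ)) :
    ContinuousAt (fun ε : ℝ => 1 / Real.sqrt (-(2 * Vreg ε ξ))) 0 := by
  have ht : 0 < (1 - ξ ^ 2) ^ 2 := by
    have h1 : 1 - ξ ^ 2 ≠ 0 := by
      intro hz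
      have hm : (ξ - 1) * (ξ + 1) = 0 := by linear_combination -hz
      rcases mul_eq_zero.1 hm with h' | h'
      · exact hξ1 (by linarith)
      · linarith
    positivity
  have c1 : ContinuousAt (fun ε : ℝ =>
      Real.sqrt ((1 - ξ ^ 2) ^ 2 + ε ^ 2) / Real.sqrt (1 + ε ^ 2)) 0 := by
    apply ContinuousAt.div
    · exact (Real.continuous_sqrt.comp (by continuity)).continuousAt
    · exact (Real.continuous_sqrt.comp (by continuity)).continuousAt
    · norm_num
  have hval : Real.sqrt ((1 - ξ ^ 2) ^ 2 + (0:ℝ) ^ 2) / Real.sqrt (1 + (0:ℝ) ^ 2) ≠ 0 := by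
    have : 0 < Real.sqrt ((1 - ξ ^ 2) ^ 2 + (0:ℝ) ^ 2) := Real.sqrt_pos.2 (by positivity)
    positivity
  have c2 : ContinuousAt (fun ε : ℝ => Vreg ε ξ) 0 := by
    unfold Vreg
    exact (c1.log hval).const_mul _
  have c3 : ContinuousAt (fun ε : ℝ => Real.sqrt (-(2 * Vreg ε ξ))) 0 :=
    ((c2.const_mul 2).neg).sqrt
  have hne : Real.sqrt (-(2 * Vreg 0 ξ)) ≠ 0 := (Real.sqrt_pos.2 hpos).ne'
  exact continuousAt_const.div c3 hne

/-- for every a ∈ (0, √2): (i) for every ε ≥ 0 the function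
ξ ↦ 1/√(−2V_ε(ξ)) is integrable on (a, √2); (ii) the integral
∫_a^{√2} dξ/√(−2V_ε(ξ)) converges, as ε → 0⁺, to ∫_a^{√2} dξ/√(−log|1 − ξ²|). -/
theorem regularized_integral_convergence (a : ℝ) (ha : a ∈ Ioo 0 (Real.sqrt 2)) :
    (∀ ε : ℝ, 0 ≤ ε →
      IntegrableOn (fun ξ : ℝ => 1 / Real.sqrt (-(2 * Vreg ε ξ)))
        (Ioo a (Real.sqrt 2))) ∧
    Tendsto (fun ε : ℝ => ∫ ξ in a..Real.sqrt 2, 1 / Real.sqrt (-(2 * Vreg ε ξ)))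
      (nhdsWithin 0 (Ioi 0))
      (nhds (∫ ξ in a..Real.sqrt 2, 1 / Real.sqrt (-Real.log |1 - ξ ^ 2|))) := by
  obtain ⟨ha0, haS⟩ := ha
  have hab : a ≤ Real.sqrt 2 := haS.le
  have hsp : (0:ℝ) < Real.sqrt 2 := Real.sqrt_pos.2 (by norm_num)
  have hint : ∀ ε : ℝ, 0 ≤ ε →
      IntegrableOn (fun ξ : ℝ => 1 / Real.sqrt (-(2 * Vreg ε ξ))) (Ioo a (Real.sqrt 2)) := by
    intro ε hε
    have hc0 : 0 < a ^ 2 * Real.sqrt 2 / (2 * (1 + ε ^ 2)) := by positivity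
    apply Integrable.mono'
      (g := fun ξ => (1 / Real.sqrt (a ^ 2 * Real.sqrt 2 / (2 * (1 + ε ^ 2)))) *
        (1 / Real.sqrt (Real.sqrt 2 - ξ)))
    · exact (g_integrable a).const_mul _
    · exact (integrand_meas ε).aestronglyMeasurable
    · filter_upwards [ae_restrict_mem measurableSet_Ioo] with ξ hξ
      rw [Real.norm_eq_abs, abs_of_nonneg (by positivity)]
      exact integrand_le ha0 hξ hε hc0 le_rfl
  refine ⟨hint, ?_⟩
  have hc1 : (0:ℝ) < a ^ 2 * Real.sqrt 2 / 4 := by positivity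
  have key : Tendsto
      (fun ε : ℝ => ∫ ξ in Ioo a (Real.sqrt 2), 1 / Real.sqrt (-(2 * Vreg ε ξ)))
      (nhdsWithin 0 (Ioi 0))
      (nhds (∫ ξ in Ioo a (Real.sqrt 2), 1 / Real.sqrt (-(2 * Vreg 0 ξ)))) := by
    apply tendsto_integral_filter_of_dominated_convergence
      (bound := fun ξ => (1 / Real.sqrt (a ^ 2 * Real.sqrt 2 / 4)) *
        (1 / Real.sqrt (Real.sqrt 2 - ξ)))
    · exact Eventually.of_forall fun ε => (integrand_meas ε).aestronglyMeasurable
    · have hmem : Ioc (0:ℝ) 1 ∈ nhdsWithin 0 (Ioi 0) :=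
        Ioc_mem_nhdsGT_of_mem (by constructor <;> norm_num)
      filter_upwards [hmem] with ε hε
      filter_upwards [ae_restrict_mem measurableSet_Ioo] with ξ hξ
      rw [Real.norm_eq_abs, abs_of_nonneg (by positivity)]
      apply integrand_le ha0 hξ hε.1.le hc1
      have h1 : (0:ℝ) < 1 + ε ^ 2 := by positivity
      have h2 : 2 * (1 + ε ^ 2) ≤ 4 := by nlinarith [hε.1, hε.2]
      gcongr
    · exact (g_integrable a).const_mul _
    · have hne : ∀ᵐ ξ : ℝ, ξ ≠ 1 := by
        rw [ae_iff]
        simp only [not_not, setOf_eq_eq_singleton]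
        exact Real.volume_singleton
      filter_upwards [ae_restrict_of_ae hne, ae_restrict_mem measurableSet_Ioo] with ξ h1 hξ
      have hpos : 0 < -(2 * Vreg 0 ξ) := by
        have := Vreg_lb ha0 hξ.1 hξ.2 le_rfl (Or.inr h1)
        have h3 : 0 < a ^ 2 * Real.sqrt 2 * (Real.sqrt 2 - ξ) / (2 * (1 + (0:ℝ) ^ 2)) := by
          have : 0 < Real.sqrt 2 - ξ := sub_pos.2 hξ.2
          positivity
        linarith
      exact ((tendsto_eps (ha0.trans hξ.1) h1 hpos).tendsto).mono_left nhdsWithin_le_nhds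
  have heq : ∀ ε : ℝ, (∫ ξ in a..Real.sqrt 2, 1 / Real.sqrt (-(2 * Vreg ε ξ)))
      = ∫ ξ in Ioo a (Real.sqrt 2), 1 / Real.sqrt (-(2 * Vreg ε ξ)) := fun ε => by
    rw [intervalIntegral.integral_of_le hab, integral_Ioc_eq_integral_Ioo]
  have heq0 : (∫ ξ in a..Real.sqrt 2, 1 / Real.sqrt (-Real.log |1 - ξ ^ 2|))
      = ∫ ξ in Ioo a (Real.sqrt 2), 1 / Real.sqrt (-(2 * Vreg 0 ξ)) := by
    rw [intervalIntegral.integral_of_le hab, integral_Ioc_eq_integral_Ioo]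
    apply integral_congr_ae
    apply Eventually.of_forall
    intro ξ
    simp only [Vreg_zero]
  rw [heq0]
  exact key.congr fun ε => (heq ε).symm
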